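/- arXiv:2007.08131 — 6 statements merged into one kernel-verified Lean document; each statement's English description precedes it below -/
import Mathlib

section
/- Let q ≥ 4 and r ≥ 1, and write m = C(q+r-3, q-2) + α with 0 ≤ α < C(q+r-3, q-3). Suppose α = β + γ with 0 ≤ β < C(q+r-4, q-3) and 0 ≤ γ < C(q+r-4, q-4). Set k = C(q+r-4, q-2) + β, so that m - k = C(q+r-4, q-3) + γ. Then K(m, q) = 2·K(k, q) + K(m-k, q-1). -/
open Finset in
/-- The Frame-Stewart quantity with explicit level r:
K(n,p) = sum_{t=0}^{r-1} 2^t * C(p+t-3,p-3) + 2^r * (n - C(p+r-3,p-2)). -/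
def FSK (n p r : ℕ) : ℕ :=
  (∑ t ∈ Finset.range r, 2 ^ t * Nat.choose (p + t - 3) (p - 3)) +
    2 ^ r * (n - Nat.choose (p + r - 3) (p - 2))

lemma FSK_sumId (b : ℕ) : ∀ c : ℕ,
    (∑ t ∈ Finset.range (c+1), 2^t * Nat.choose (b+1+t) (b+1))
      = 2*(∑ t ∈ Finset.range c, 2^t * Nat.choose (b+1+t) (b+1))
        + ∑ t ∈ Finset.range (c+1), 2^t * Nat.choose (b+t) b
  | 0 => by simp
  | (c+1) => by
    conv_lhs => rw [Finset.sum_range_succ, FSK_sumId b c]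
    rw [Finset.sum_range_succ (f := fun t => 2^t * Nat.choose (b+t) b) (n := c+1),
      Finset.sum_range_succ (f := fun t => 2^t * Nat.choose (b+1+t) (b+1)) (n := c)]
    have pas : Nat.choose (b+1+(c+1)) (b+1)
        = Nat.choose (b+(c+1)) b + Nat.choose (b+(c+1)) (b+1) := by
      rw [show b+1+(c+1) = (b+(c+1))+1 by ring]
      exact Nat.choose_succ_succ _ _
    rw [pas, show b+(c+1) = b+1+c by ring]
    ring

/-- The Frame-Stewart recursion step: K(m,q) = 2*K(k,q) + K(m-k,q-1), where k has level r-1 for q pegs and m-k has level r for q-1 pegs. -/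
theorem FSK_recursion (q r m k α β γ : ℕ) (hq : 4 ≤ q) (hr : 1 ≤ r)
    (hm : m = Nat.choose (q + r - 3) (q - 2) + α)
    (hα : α < Nat.choose (q + r - 3) (q - 3))
    (hβ : β < Nat.choose (q + r - 4) (q - 3))
    (hγ : γ < Nat.choose (q + r - 4) (q - 4))
    (hαβγ : α = β + γ)
    (hk : k = Nat.choose (q + r - 4) (q - 2) + β) :
    m - k = Nat.choose (q + r - 4) (q - 3) + γ ∧
      FSK m q r = 2 * FSK k q (r - 1) + FSK (m - k) (q - 1) r := by
  obtain ⟨b, rfl⟩ : ∃ b, q = b + 4 := ⟨q - 4, by omega⟩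
  obtain ⟨c, rfl⟩ : ∃ c, r = c + 1 := ⟨r - 1, by omega⟩
  simp only [show b+4+(c+1)-3 = b+c+2 by omega, show b+4+(c+1)-4 = b+c+1 by omega,
    show b+4-2 = b+2 by omega, show b+4-3 = b+1 by omega, show b+4-4 = b by omega] at *
  have pas : Nat.choose (b+c+2) (b+2)
      = Nat.choose (b+c+1) (b+1) + Nat.choose (b+c+1) (b+2) := by
    rw [show b+c+2 = (b+c+1)+1 by ring, show b+2 = (b+1)+1 by ring]
    exact Nat.choose_succ_succ _ _
  have hmk : m - k = Nat.choose (b+c+1) (b+1) + γ := by omega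
  refine ⟨hmk, ?_⟩
  unfold FSK
  simp only [show ∀ t, b+4+t-3 = b+1+t from fun t => by omega,
    show ∀ t, b+4-1+t-3 = b+t from fun t => by omega,
    show b+4+(c+1)-3 = b+c+2 by omega, show b+4+(c+1-1)-3 = b+c+1 by omega,
    show b+4-1+(c+1)-3 = b+c+1 by omega,
    show b+4-2 = b+2 by omega, show b+4-3 = b+1 by omega,
    show b+4-1-2 = b+1 by omega, show b+4-1-3 = b by omega,
    show c+1-1 = c by omega, show b+1+(c+1) = b+c+2 by omega,
    show b+1+c = b+c+1 by omega, show b+(c+1) = b+c+1 by omega, hmk]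
  have e1 : m - Nat.choose (b+c+2) (b+2) = α := by omega
  have e2 : k - Nat.choose (b+c+1) (b+2) = β := by omega
  have e3 : Nat.choose (b+c+1) (b+1) + γ - Nat.choose (b+c+1) (b+1) = γ := by omega
  rw [e1, e2, e3, FSK_sumId b c, hαβγ]
  ring
end

section
/- Let n ≥ 2, p ≥ 3, and let r be the unique natural number with C(p+r-3, p-2) ≤ n < C(p+r-2, p-2). Then K(n,p) - K(n-1,p) equals 2^{r-1} if n = C(p+r-3, p-2), and equals 2^r otherwise. -/
/-- K(n,p) - K(n-1,p) equals 2^(r-1) if n = C(p+r-3,p-2) (where n-1 has level r-1), and 2^r otherwise. -/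
theorem FSK_succ_diff (n p r : ℕ) (hn : 2 ≤ n) (hp : 3 ≤ p)
    (h1 : Nat.choose (p + r - 3) (p - 2) ≤ n)
    (h2 : n < Nat.choose (p + r - 2) (p - 2)) :
    (n = Nat.choose (p + r - 3) (p - 2) →
      FSK n p r = FSK (n - 1) p (r - 1) + 2 ^ (r - 1)) ∧
    (n ≠ Nat.choose (p + r - 3) (p - 2) →
      FSK n p r = FSK (n - 1) p r + 2 ^ r) := by
  have hr : 1 ≤ r := by
    rcases Nat.eq_zero_or_pos r with h | h
    · subst h
      rw [show p + 0 - 2 = p - 2 by omega, Nat.choose_self] at h2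
      omega
    · exact h
  constructor
  · intro heq
    obtain ⟨s, rfl⟩ : ∃ s, r = s + 1 := ⟨r - 1, by omega⟩
    have hs : s + 1 - 1 = s := rfl
    -- Pascal's rule: C(p+s-2, p-2) = C(p+s-3, p-3) + C(p+s-3, p-2)
    have hpascal : Nat.choose (p + s - 2) (p - 2)
        = Nat.choose (p + s - 3) (p - 3) + Nat.choose (p + s - 3) (p - 2) := by
      rw [show p + s - 2 = (p + s - 3) + 1 by omega, show p - 2 = (p - 3) + 1 by omega]
      exact Nat.choose_succ_succ _ _
    have hApos : 1 ≤ Nat.choose (p + s - 3) (p - 3) :=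
      Nat.choose_pos (by omega)
    unfold FSK
    rw [hs, Finset.sum_range_succ]
    rw [show p + (s + 1) - 3 = p + s - 2 by omega] at *
    rw [show n - Nat.choose (p + s - 2) (p - 2) = 0 by omega, Nat.mul_zero, Nat.add_zero]
    have h3 : n - 1 - Nat.choose (p + s - 3) (p - 2)
        = Nat.choose (p + s - 3) (p - 3) - 1 := by omega
    rw [h3]
    have h4 : Nat.choose (p + s - 3) (p - 3)
        = (Nat.choose (p + s - 3) (p - 3) - 1) + 1 := by omega
    conv_lhs => rw [h4]
    ring
  · intro hne
    have hlt : Nat.choose (p + r - 3) (p - 2) < n := lt_of_le_of_ne h1 (Ne.symm hne)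
    unfold FSK
    rw [show n - Nat.choose (p + r - 3) (p - 2)
        = (n - 1 - Nat.choose (p + r - 3) (p - 2)) + 1 by omega]
    ring
end

section
/- For n ≥ 2 and p ≥ 3 with r the unique natural number satisfying C(p+r-3, p-2) ≤ n < C(p+r-2, p-2), the inequality 2·K(n-1, p) - K(n, p) ≥ K(n, p) - 2^{r+1} holds. -/
lemma FSK_succ_level (p : ℕ) (hp : 3 ≤ p) (s : ℕ) :
    Nat.choose (p + (s + 1) - 3) (p - 2)
      = Nat.choose (p + s - 3) (p - 2) + Nat.choose (p + s - 3) (p - 3) := by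
  have h3 : p + (s + 1) - 3 = (p + s - 3) + 1 := by omega
  have h4 : p - 2 = (p - 3) + 1 := by omega
  rw [h3, h4, Nat.choose_succ_succ, Nat.succ_eq_add_one]
  omega

/-- 2*K(n-1,p) - K(n,p) >= K(n,p) - 2^(r+1), where r is the level of n and r' the level of n-1. -/
theorem FSK_two_pred (n p r r' : ℕ) (hn : 2 ≤ n) (hp : 3 ≤ p)
    (h1 : Nat.choose (p + r - 3) (p - 2) ≤ n)
    (h2 : n < Nat.choose (p + r - 2) (p - 2))
    (h1' : Nat.choose (p + r' - 3) (p - 2) ≤ n - 1)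
    (h2' : n - 1 < Nat.choose (p + r' - 2) (p - 2)) :
    2 * (FSK (n - 1) p r' : ℤ) - FSK n p r ≥ (FSK n p r : ℤ) - 2 ^ (r + 1) := by
  rw [show p + r - 2 = p + (r + 1) - 3 by omega] at h2
  rw [show p + r' - 2 = p + (r' + 1) - 3 by omega] at h2'
  have hbpos : ∀ s, 0 < Nat.choose (p + s - 3) (p - 3) :=
    fun s => Nat.choose_pos (by omega)
  have hmono : StrictMono (fun s => Nat.choose (p + s - 3) (p - 2)) :=
    strictMono_nat_of_lt_succ (fun s => by
      have h := FSK_succ_level p hp s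
      have := hbpos s
      show Nat.choose (p + s - 3) (p - 2) < Nat.choose (p + (s + 1) - 3) (p - 2)
      omega)
  -- r ∈ {r', r'+1}
  have hr1 : r ≤ r' + 1 := by
    by_contra h
    have : Nat.choose (p + (r' + 1) - 3) (p - 2) < Nat.choose (p + r - 3) (p - 2) :=
      hmono (by omega)
    omega
  have hr2 : r' ≤ r := by
    by_contra h
    have : Nat.choose (p + (r + 1) - 3) (p - 2) ≤ Nat.choose (p + r' - 3) (p - 2) :=
      hmono.monotone (by omega)
    omega
  have key : FSK n p r ≤ FSK (n - 1) p r' + 2 ^ r := by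
    rcases (by omega : r = r' ∨ r = r' + 1) with h | h
    · subst h
      unfold FSK
      have hsplit : n - Nat.choose (p + r - 3) (p - 2)
          = (n - 1 - Nat.choose (p + r - 3) (p - 2)) + 1 := by omega
      rw [hsplit, Nat.mul_add, mul_one]
      omega
    · subst h
      have hb := FSK_succ_level p hp r'
      have hpos := hbpos r'
      have hnval : n = Nat.choose (p + (r' + 1) - 3) (p - 2) := by omega
      unfold FSK
      rw [Finset.sum_range_succ]
      have hz : n - Nat.choose (p + (r' + 1) - 3) (p - 2) = 0 := by omega
      have hB : n - 1 - Nat.choose (p + r' - 3) (p - 2)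
          = Nat.choose (p + r' - 3) (p - 3) - 1 := by omega
      rw [hz, Nat.mul_zero, Nat.add_zero, hB]
      obtain ⟨k, hk⟩ : ∃ k, Nat.choose (p + r' - 3) (p - 3) = k + 1 :=
        ⟨Nat.choose (p + r' - 3) (p - 3) - 1, by omega⟩
      rw [hk]
      have h2r : 2 ^ r' ≤ 2 ^ (r' + 1) := Nat.pow_le_pow_right (by norm_num) (by omega)
      have heq : 2 ^ r' * (k + 1 - 1) + 2 ^ r' = 2 ^ r' * (k + 1) := by
        simp [Nat.mul_add]
      linarith [heq, h2r]
  have keyz : (FSK n p r : ℤ) ≤ FSK (n - 1) p r' + 2 ^ r := by exact_mod_cast key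
  have hpow : (2 : ℤ) ^ (r + 1) = 2 * 2 ^ r := by rw [pow_succ]; ring
  linarith
end

section
/- The function K(·, p) is strictly increasing in n for each fixed p ≥ 3: for all n ≥ 2, K(n, p) > K(n-1, p). -/
/-- K(.,p) is strictly increasing: K(n,p) > K(n-1,p) for n >= 2, with r, r' the levels of n and n-1. -/
theorem FSK_strictMono (n p r r' : ℕ) (hn : 2 ≤ n) (hp : 3 ≤ p)
    (h1 : Nat.choose (p + r - 3) (p - 2) ≤ n)
    (h2 : n < Nat.choose (p + r - 2) (p - 2))
    (h1' : Nat.choose (p + r' - 3) (p - 2) ≤ n - 1)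
    (h2' : n - 1 < Nat.choose (p + r' - 2) (p - 2)) :
    FSK n p r > FSK (n - 1) p r' := by
  obtain ⟨q, rfl⟩ : ∃ q, p = q + 3 := ⟨p - 3, by omega⟩
  simp only [FSK]
  have eq1 : ∀ t, q + 3 + t - 3 = q + t := fun t => by omega
  have eq2 : q + 3 - 3 = q := by omega
  have eq3 : q + 3 - 2 = q + 1 := by omega
  have eq4 : ∀ t, q + 3 + t - 2 = q + t + 1 := fun t => by omega
  simp only [eq1, eq2, eq3, eq4] at *
  have hpow : ∀ m : ℕ, 0 < 2 ^ m := fun m => by positivity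
  rcases eq_or_ne r r' with rfl | hne
  · have hx : n - (q + r).choose (q + 1) = (n - 1 - (q + r).choose (q + 1)) + 1 := by omega
    rw [hx, Nat.mul_add, Nat.mul_one]
    have := hpow r
    linarith
  · -- first show r' < r
    have hlt : r' < r := by
      by_contra hge
      have h : r + 1 ≤ r' := by omega
      have : (q + r + 1).choose (q + 1) ≤ (q + r').choose (q + 1) :=
        Nat.choose_le_choose _ (by omega)
      omega
    have hmono : (q + r' + 1).choose (q + 1) ≤ (q + r).choose (q + 1) :=
      Nat.choose_le_choose _ (by omega)
    have hn' : (q + r' + 1).choose (q + 1) = n := by omega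
    have hnr : (q + r).choose (q + 1) = n := by omega
    have hpascal : (q + r' + 1).choose (q + 1)
        = (q + r').choose q + (q + r').choose (q + 1) := Nat.choose_succ_succ _ _
    have hC1pos : 0 < (q + r').choose q := Nat.choose_pos (by omega)
    have hsub : Finset.range (r' + 1) ⊆ Finset.range r := by
      apply Finset.range_subset_range.mpr; omega
    have hS : (∑ t ∈ Finset.range (r' + 1), 2 ^ t * Nat.choose (q + t) q)
        ≤ ∑ t ∈ Finset.range r, 2 ^ t * Nat.choose (q + t) q :=
      Finset.sum_le_sum_of_subset hsub
    rw [Finset.sum_range_succ] at hS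
    have hx : n - 1 - (q + r').choose (q + 1) = (q + r').choose q - 1 := by omega
    rw [hnr, hx, Nat.sub_self, Nat.mul_zero, Nat.add_zero]
    obtain ⟨c, hc⟩ : ∃ c, (q + r').choose q = c + 1 := ⟨(q + r').choose q - 1, by omega⟩
    have h2r : 2 ^ r' * ((q + r').choose q - 1) + 2 ^ r'
        = 2 ^ r' * (q + r').choose q := by
      rw [hc, Nat.add_sub_cancel, Nat.mul_add, Nat.mul_one]
    have := hpow r'
    have hmul : 2 ^ r' ≤ 2 ^ r' * (q + r').choose q := Nat.le_mul_of_pos_right _ hC1pos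
    linarith
end

section
/- For all n ≥ 1 and p ≥ 3, M(n, p) ≤ K(n, p), where M(n,p) is the minimal number of moves needed to solve the Tower of Hanoi problem with n disks and p pegs. -/
/-- A state of the (n,p) Tower of Hanoi problem: each disk (0 = smallest)
sits on one of p pegs. -/
abbrev HState (n p : ℕ) := Fin n → Fin p

/-- A legal Tower of Hanoi move: exactly one disk j changes peg, j is the
smallest disk on its source peg, and every disk already on the target peg
is larger than j. -/
def HMove {n p : ℕ} (f g : HState n p) : Prop :=
  ∃ j : Fin n, g j ≠ f j ∧ (∀ i, i ≠ j → g i = f i) ∧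
    (∀ i, i ≠ j → f i = f j → j < i) ∧ (∀ i, i ≠ j → f i = g j → j < i)

/-- The shortest-path distance between two states: the least number of legal
moves in a path from f to g. -/
noncomputable def hDist {n p : ℕ} (f g : HState n p) : ℕ :=
  sInf {k | ∃ χ : List (HState n p), χ.Chain' HMove ∧
    χ.head? = some f ∧ χ.getLast? = some g ∧ χ.length = k + 1}

/-- Disk j moves at step i of the sequence χ. -/
def MovesAt {n p : ℕ} (j : Fin n) (χ : List (HState n p)) (i : ℕ) : Prop :=
  ∃ f g : HState n p, χ[i]? = some f ∧ χ[i+1]? = some g ∧ f j ≠ g j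

/-- A demolishing sequence from the state f: a path of legal moves starting
at f, whose last move moves the largest disk `big`, and in which `big` moves
exactly once. -/
def IsDemolishing {n p : ℕ} (big : Fin n) (f : HState n p)
    (χ : List (HState n p)) : Prop :=
  χ.Chain' HMove ∧ χ.head? = some f ∧ 2 ≤ χ.length ∧
    MovesAt big χ (χ.length - 2) ∧ ∀ i, MovesAt big χ i → i = χ.length - 2

/-- A minimal demolishing sequence from f. -/
def IsMinDemolishing {n p : ℕ} (big : Fin n) (f : HState n p)
    (χ : List (HState n p)) : Prop :=
  IsDemolishing big f χ ∧ ∀ χ', IsDemolishing big f χ' → χ.length ≤ χ'.length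

namespace FrameStewart

variable {n p : ℕ}

/-- Reachability by legal moves, all states lying in the peg set `S`. -/
inductive ReachIn (S : Finset (Fin p)) : HState n p → HState n p → ℕ → Prop
  | refl (f : HState n p) (hf : ∀ i, f i ∈ S) : ReachIn S f f 0
  | tail {f g h : HState n p} {k : ℕ} (hr : ReachIn S f g k) (hm : HMove g h)
      (hmem : ∀ i, h i ∈ S) : ReachIn S f h (k + 1)

lemma ReachIn.start_mem {S : Finset (Fin p)} {f g : HState n p} {k : ℕ}
    (h : ReachIn S f g k) : ∀ i, f i ∈ S := by
  induction h with
  | refl hf => exact hf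
  | tail hr hm hmem ih => exact ih

lemma ReachIn.end_mem {S : Finset (Fin p)} {f g : HState n p} {k : ℕ}
    (h : ReachIn S f g k) : ∀ i, g i ∈ S := by
  induction h with
  | refl hf => exact hf
  | tail hr hm hmem ih => exact hmem

lemma ReachIn.trans {S : Finset (Fin p)} {f g h : HState n p} {k l : ℕ}
    (h1 : ReachIn S f g k) (h2 : ReachIn S g h l) : ReachIn S f h (k + l) := by
  induction h2 with
  | refl hf => exact h1
  | tail hr hm hmem ih => exact .tail ih hm hmem

lemma ReachIn.toChain {S : Finset (Fin p)} {f g : HState n p} {k : ℕ}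
    (h : ReachIn S f g k) :
    ∃ χ : List (HState n p), χ.Chain' HMove ∧ χ.head? = some f ∧
      χ.getLast? = some g ∧ χ.length = k + 1 := by
  induction h with
  | refl hf => exact ⟨[f], List.isChain_singleton _, rfl, rfl, rfl⟩
  | @tail g' h' k' hr hm hmem ih =>
    obtain ⟨χ, hc, hh, hl, hlen⟩ := ih
    have hne : χ ≠ [] := by intro h; simp [h] at hlen
    refine ⟨χ ++ [h'], ?_, ?_, ?_, ?_⟩
    · rw [List.Chain', List.isChain_append]
      refine ⟨hc, List.isChain_singleton _, ?_⟩
      intro x hx y hy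
      rw [hl] at hx; simp at hx hy; subst hx hy; exact hm
    · rw [List.head?_append_of_ne_nil _ hne]; exact hh
    · simp
    · simp [hlen]

lemma hDist_le_of_reach {S : Finset (Fin p)} {f g : HState n p} {k : ℕ}
    (h : ReachIn S f g k) : hDist f g ≤ k := by
  obtain ⟨χ, h1, h2, h3, h4⟩ := h.toChain
  exact Nat.sInf_le ⟨χ, h1, h2, h3, h4⟩

end FrameStewart
namespace FrameStewart

variable {n p : ℕ}

/-- Combined state: disks below `n₁` follow `t`, the rest sit on `β`. -/
def combineT (n₁ : ℕ) (t : HState n₁ p) (β : Fin p) : HState n p :=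
  fun i => if h : (i : ℕ) < n₁ then t ⟨i, h⟩ else β

/-- Combined state: disks below `n₁` sit on `c`, the rest follow `b`. -/
def combineB (n₁ n₂ : ℕ) (hn : n₁ + n₂ = n) (c : Fin p) (b : HState n₂ p) : HState n p :=
  fun i => if h : (i : ℕ) < n₁ then c else b ⟨(i : ℕ) - n₁, by have := i.isLt; omega⟩

lemma hmove_liftTop {n₁ : ℕ} (hle : n₁ ≤ n) {t t' : HState n₁ p} (hm : HMove t t')
    (β : Fin p) : HMove (combineT (n := n) n₁ t β) (combineT n₁ t' β) := by
  obtain ⟨j, h1, h2, h3, h4⟩ := hm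
  refine ⟨⟨j, lt_of_lt_of_le j.isLt hle⟩, ?_, ?_, ?_, ?_⟩
  · simpa [combineT, j.isLt] using h1
  · intro i hi
    by_cases hc : (i : ℕ) < n₁
    · have : (⟨(i : ℕ), hc⟩ : Fin n₁) ≠ j := by
        intro h; apply hi; apply Fin.ext; simpa [Fin.ext_iff] using h
      simpa [combineT, hc, j.isLt] using h2 ⟨(i : ℕ), hc⟩ this
    · simp [combineT, hc]
  · intro i hi hfi
    by_cases hc : (i : ℕ) < n₁
    · have hne : (⟨(i : ℕ), hc⟩ : Fin n₁) ≠ j := by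
        intro h; apply hi; apply Fin.ext; simpa [Fin.ext_iff] using h
      have := h3 ⟨(i : ℕ), hc⟩ hne (by simpa [combineT, hc, j.isLt] using hfi)
      simpa [Fin.lt_iff_val_lt_val] using this
    · simp only [Fin.lt_iff_val_lt_val]
      exact lt_of_lt_of_le j.isLt (le_of_not_gt hc)
  · intro i hi hfi
    by_cases hc : (i : ℕ) < n₁
    · have hne : (⟨(i : ℕ), hc⟩ : Fin n₁) ≠ j := by
        intro h; apply hi; apply Fin.ext; simpa [Fin.ext_iff] using h
      have := h4 ⟨(i : ℕ), hc⟩ hne (by simpa [combineT, hc, j.isLt] using hfi)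
      simpa [Fin.lt_iff_val_lt_val] using this
    · simp only [Fin.lt_iff_val_lt_val]
      exact lt_of_lt_of_le j.isLt (le_of_not_gt hc)

lemma ReachIn.liftTop {n₁ : ℕ} (hle : n₁ ≤ n) {S : Finset (Fin p)}
    {t t' : HState n₁ p} {k : ℕ} (h : ReachIn S t t' k) {β : Fin p} (hβ : β ∈ S) :
    ReachIn (n := n) S (combineT n₁ t β) (combineT n₁ t' β) k := by
  induction h with
  | refl hf =>
    exact .refl _ (fun i => by unfold combineT; split <;> [exact hf _; exact hβ])
  | @tail g' h' k' hr hm hmem ih =>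
    exact .tail ih (hmove_liftTop hle hm β)
      (fun i => by unfold combineT; split <;> [exact hmem _; exact hβ])

lemma hmove_liftBottom {n₁ n₂ : ℕ} (hn : n₁ + n₂ = n) {c : Fin p}
    {b b' : HState n₂ p} (hm : HMove b b') (hb : ∀ i, b i ≠ c) (hb' : ∀ i, b' i ≠ c) :
    HMove (combineB n₁ n₂ hn c b) (combineB n₁ n₂ hn c b') := by
  obtain ⟨j, h1, h2, h3, h4⟩ := hm
  have hj : n₁ + (j : ℕ) < n := by have := j.isLt; omega
  have hjn : ¬ (n₁ + (j : ℕ) < n₁) := by omega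
  have hjsub : n₁ + (j : ℕ) - n₁ = (j : ℕ) := by omega
  refine ⟨⟨n₁ + (j : ℕ), hj⟩, ?_, ?_, ?_, ?_⟩
  · simpa [combineB, hjn, hjsub, Fin.eta] using h1
  · intro i hi
    by_cases hc : (i : ℕ) < n₁
    · simp [combineB, hc]
    · have hne : (⟨(i : ℕ) - n₁, by have := i.isLt; omega⟩ : Fin n₂) ≠ j := by
        intro h; apply hi; apply Fin.ext
        have : (i : ℕ) - n₁ = (j : ℕ) := by simpa [Fin.ext_iff] using h
        simp; omega
      simpa [combineB, hc, hjn, hjsub] using h2 _ hne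
  · intro i hi hfi
    by_cases hc : (i : ℕ) < n₁
    · exfalso
      have : c = b j := by simpa [combineB, hc, hjn, hjsub] using hfi
      exact hb j this.symm
    · have hne : (⟨(i : ℕ) - n₁, by have := i.isLt; omega⟩ : Fin n₂) ≠ j := by
        intro h; apply hi; apply Fin.ext
        have : (i : ℕ) - n₁ = (j : ℕ) := by simpa [Fin.ext_iff] using h
        simp; omega
      have := h3 _ hne (by simpa [combineB, hc, hjn, hjsub] using hfi)
      simp only [Fin.lt_iff_val_lt_val] at this ⊢
      simp at this ⊢; omega
  · intro i hi hfi
    by_cases hc : (i : ℕ) < n₁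
    · exfalso
      have : c = b' j := by simpa [combineB, hc, hjn, hjsub] using hfi
      exact hb' j this.symm
    · have hne : (⟨(i : ℕ) - n₁, by have := i.isLt; omega⟩ : Fin n₂) ≠ j := by
        intro h; apply hi; apply Fin.ext
        have : (i : ℕ) - n₁ = (j : ℕ) := by simpa [Fin.ext_iff] using h
        simp; omega
      have := h4 _ hne (by simpa [combineB, hc, hjn, hjsub] using hfi)
      simp only [Fin.lt_iff_val_lt_val] at this ⊢
      simp at this ⊢; omega

lemma ReachIn.liftBottom {n₁ n₂ : ℕ} (hn : n₁ + n₂ = n) {S : Finset (Fin p)}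
    {c : Fin p} (hc : c ∈ S) {b b' : HState n₂ p} {k : ℕ}
    (h : ReachIn (S.erase c) b b' k) :
    ReachIn (n := n) S (combineB n₁ n₂ hn c b) (combineB n₁ n₂ hn c b') k := by
  induction h with
  | refl hf =>
    refine .refl _ (fun i => ?_)
    unfold combineB; split
    · exact hc
    · exact Finset.mem_of_mem_erase (hf _)
  | @tail g' h' k' hr hm hmem ih =>
    have hg : ∀ i, g' i ≠ c := fun i => (Finset.mem_erase.mp (hr.end_mem i)).1
    have hh : ∀ i, h' i ≠ c := fun i => (Finset.mem_erase.mp (hmem i)).1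
    refine .tail ih (hmove_liftBottom hn hm hg hh) (fun i => ?_)
    unfold combineB; split
    · exact hc
    · exact Finset.mem_of_mem_erase (hmem _)

end FrameStewart
namespace FrameStewart

variable {n p : ℕ}

lemma single_move {a b : Fin p} (S : Finset (Fin p)) (ha : a ∈ S) (hb : b ∈ S)
    (hab : a ≠ b) : ReachIn (n := 1) S (fun _ => a) (fun _ => b) 1 := by
  refine .tail (.refl _ (fun _ => ha)) ⟨0, by simpa using hab.symm, ?_, ?_, ?_⟩ (fun _ => hb) <;>
    · intro i hi
      exact absurd (Fin.ext (by omega)) hi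

lemma exists_spare (S : Finset (Fin p)) (h3 : 3 ≤ S.card) (a b : Fin p) :
    ∃ c ∈ S, c ≠ a ∧ c ≠ b := by
  have h1 : 1 ≤ ((S.erase a).erase b).card := by
    have h4 := Finset.pred_card_le_card_erase (s := S.erase a) (a := b)
    have h5 := Finset.pred_card_le_card_erase (s := S) (a := a)
    omega
  obtain ⟨c, hc⟩ := Finset.card_pos.mp h1
  simp only [Finset.mem_erase] at hc
  exact ⟨c, hc.2.2, hc.2.1, hc.1⟩

lemma combineT_const (n₁ : ℕ) (a : Fin p) :
    combineT (n := n) n₁ (fun _ => a) a = fun _ => a := by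
  funext i; unfold combineT; split <;> rfl

lemma combineT_eq_combineB (n₁ n₂ : ℕ) (hn : n₁ + n₂ = n) (c β : Fin p) :
    combineT (n := n) n₁ (fun _ => c) β = combineB n₁ n₂ hn c (fun _ => β) := by
  funext i; unfold combineT combineB; split <;> rfl

lemma hanoi3 (S : Finset (Fin p)) (h3 : 3 ≤ S.card) :
    ∀ n (a b : Fin p), a ∈ S → b ∈ S → a ≠ b →
      ReachIn (n := n) S (fun _ => a) (fun _ => b) (2 ^ n - 1) := by
  intro n
  induction n with
  | zero =>
    intro a b ha hb hab
    have : (fun _ => a : HState 0 p) = fun _ => b := funext fun i => i.elim0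
    rw [this]
    exact .refl _ (fun i => i.elim0)
  | succ n ih =>
    intro a b ha hb hab
    obtain ⟨c, hcS, hca, hcb⟩ := exists_spare S h3 a b
    have lift1 : ReachIn (n := n + 1) S (combineT n (fun _ => a) a)
        (combineT n (fun _ => c) a) (2 ^ n - 1) :=
      (ih a c ha hcS (Ne.symm hca)).liftTop (Nat.le_succ n) ha
    have mid : ReachIn (n := n + 1) S (combineB n 1 rfl c (fun _ => a))
        (combineB n 1 rfl c (fun _ => b)) 1 :=
      (single_move (S.erase c) (Finset.mem_erase.mpr ⟨(Ne.symm hca), ha⟩)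
        (Finset.mem_erase.mpr ⟨(Ne.symm hcb), hb⟩) hab).liftBottom rfl hcS
    have lift3 : ReachIn (n := n + 1) S (combineT n (fun _ => c) b)
        (combineT n (fun _ => b) b) (2 ^ n - 1) :=
      (ih c b hcS hb hcb).liftTop (Nat.le_succ n) hb
    rw [combineT_const] at lift1 lift3
    rw [combineT_eq_combineB n 1 rfl c a] at lift1
    rw [combineT_eq_combineB n 1 rfl c b] at lift3
    have total := (lift1.trans mid).trans lift3
    have hcount : 2 ^ n - 1 + 1 + (2 ^ n - 1) = 2 ^ (n + 1) - 1 := by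
      have := Nat.one_le_two_pow (n := n); ring_nf; omega
    rwa [hcount] at total

end FrameStewart
namespace FrameStewart

def Af (q t : ℕ) : ℕ := 2 ^ t * Nat.choose (q + t - 3) (q - 3)

def Asum (q r : ℕ) : ℕ := ∑ t ∈ Finset.range r, Af q t

lemma FSK_eq (n q r : ℕ) :
    FSK n q r = Asum q r + 2 ^ r * (n - Nat.choose (q + r - 3) (q - 2)) := rfl

lemma sum_two_pow (n : ℕ) : ∑ t ∈ Finset.range n, 2 ^ t = 2 ^ n - 1 := by
  induction n with
  | zero => simp
  | succ n ih =>
    rw [Finset.sum_range_succ, ih]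
    have := Nat.one_le_two_pow (n := n)
    ring_nf; omega

lemma FSK_three (n : ℕ) : FSK n 3 n = 2 ^ n - 1 := by
  rw [FSK_eq]
  have h1 : ∀ t, Af 3 t = 2 ^ t := by
    intro t; unfold Af
    have e : 3 + t - 3 = t := by omega
    simp [e]
  have e2 : 3 + n - 3 = n := by omega
  simp [Asum, h1, e2, Nat.choose_one_right, sum_two_pow]

lemma Af_rec (q' s : ℕ) :
    Af (q' + 4) (s + 1) = 2 * Af (q' + 4) s + Af (q' + 3) (s + 1) := by
  unfold Af
  have e1 : q' + 4 + (s + 1) - 3 = q' + s + 1 + 1 := by omega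
  have e2 : q' + 4 - 3 = q' + 1 := by omega
  have e3 : q' + 4 + s - 3 = q' + s + 1 := by omega
  have e4 : q' + 3 + (s + 1) - 3 = q' + s + 1 := by omega
  have e5 : q' + 3 - 3 = q' := by omega
  rw [e1, e2, e3, e4, e5, Nat.choose_succ_succ (q' + s + 1) q']
  ring

lemma Asum_rec (q' : ℕ) : ∀ r, Asum (q' + 4) (r + 1) =
    2 * Asum (q' + 4) r + Asum (q' + 3) (r + 1) := by
  intro r
  induction r with
  | zero => simp [Asum, Af, Nat.choose_self]
  | succ s ih =>
    have hQ : Asum (q'+4) (s+1+1) = Asum (q'+4) (s+1) + Af (q'+4) (s+1) :=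
      Finset.sum_range_succ _ _
    have hQ2 : Asum (q'+4) (s+1) = Asum (q'+4) s + Af (q'+4) s :=
      Finset.sum_range_succ _ _
    have hP : Asum (q'+3) (s+1+1) = Asum (q'+3) (s+1) + Af (q'+3) (s+1) :=
      Finset.sum_range_succ _ _
    conv_lhs => rw [hQ, ih, Af_rec]
    rw [hQ2, hP]
    ring

lemma FSK_id_A (q' r' n : ℕ)
    (hn : Nat.choose (q'+r'+2) (q'+1) + Nat.choose (q'+r'+1) (q'+2) ≤ n) :
    2 * FSK (n - Nat.choose (q'+r'+2) (q'+1)) (q'+4) r' +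
      FSK (Nat.choose (q'+r'+2) (q'+1)) (q'+3) (r'+2) = FSK n (q'+4) (r'+1) := by
  have pA : Nat.choose (q'+r'+2) (q'+2) =
      Nat.choose (q'+r'+1) (q'+1) + Nat.choose (q'+r'+1) (q'+2) :=
    Nat.choose_succ_succ (q'+r'+1) (q'+1)
  have pB : Nat.choose (q'+r'+2) (q'+1) =
      Nat.choose (q'+r'+1) q' + Nat.choose (q'+r'+1) (q'+1) :=
    Nat.choose_succ_succ (q'+r'+1) q'
  rw [FSK_eq, FSK_eq, FSK_eq]
  have e1 : q' + 4 + r' - 3 = q' + r' + 1 := by omega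
  have e2 : q' + 4 - 2 = q' + 2 := by omega
  have e3 : q' + 3 + (r' + 2) - 3 = q' + r' + 2 := by omega
  have e4 : q' + 3 - 2 = q' + 1 := by omega
  have e5 : q' + 4 + (r' + 1) - 3 = q' + r' + 2 := by omega
  rw [e1, e2, e3, e4, e5, Nat.sub_self, mul_zero, add_zero]
  have eA : Asum (q'+3) (r'+2) = Asum (q'+3) (r'+1) + 2^(r'+1) * Nat.choose (q'+r'+1) q' := by
    rw [Asum, Finset.sum_range_succ, ← Asum]
    unfold Af
    have e6 : q' + 3 + (r' + 1) - 3 = q' + r' + 1 := by omega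
    have e7 : q' + 3 - 3 = q' := by omega
    rw [e6, e7]
  rw [eA, Asum_rec]
  have key : n - Nat.choose (q'+r'+2) (q'+1) - Nat.choose (q'+r'+1) (q'+2)
      + Nat.choose (q'+r'+1) q' = n - Nat.choose (q'+r'+2) (q'+2) := by omega
  rw [← key, pow_succ]
  ring

lemma FSK_id_B (q' r' n : ℕ) (h1 : Nat.choose (q'+r'+2) (q'+2) ≤ n) :
    2 * FSK (Nat.choose (q'+r'+1) (q'+2)) (q'+4) r' +
      FSK (n - Nat.choose (q'+r'+1) (q'+2)) (q'+3) (r'+1) = FSK n (q'+4) (r'+1) := by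
  have pA : Nat.choose (q'+r'+2) (q'+2) =
      Nat.choose (q'+r'+1) (q'+1) + Nat.choose (q'+r'+1) (q'+2) :=
    Nat.choose_succ_succ (q'+r'+1) (q'+1)
  rw [FSK_eq, FSK_eq, FSK_eq]
  have e1 : q' + 4 + r' - 3 = q' + r' + 1 := by omega
  have e2 : q' + 4 - 2 = q' + 2 := by omega
  have e3 : q' + 3 + (r' + 1) - 3 = q' + r' + 1 := by omega
  have e4 : q' + 3 - 2 = q' + 1 := by omega
  have e5 : q' + 4 + (r' + 1) - 3 = q' + r' + 2 := by omega
  rw [e1, e2, e3, e4, e5, Nat.sub_self, mul_zero, add_zero]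
  rw [Asum_rec]
  have key : n - Nat.choose (q'+r'+1) (q'+2) - Nat.choose (q'+r'+1) (q'+1)
      = n - Nat.choose (q'+r'+2) (q'+2) := by omega
  rw [← key, pow_succ]
  ring

end FrameStewart
namespace FrameStewart

lemma assemble {p n n₁ n₂ : ℕ} (hn : n₁ + n₂ = n) {S : Finset (Fin p)}
    {a b c : Fin p} (hcS : c ∈ S) (ha : a ∈ S) (hb : b ∈ S) {k₁ k₂ k₃ : ℕ}
    (r1 : ReachIn (n := n₁) S (fun _ => a) (fun _ => c) k₁)
    (r2 : ReachIn (n := n₂) (S.erase c) (fun _ => a) (fun _ => b) k₂)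
    (r3 : ReachIn (n := n₁) S (fun _ => c) (fun _ => b) k₃) :
    ReachIn (n := n) S (fun _ => a) (fun _ => b) (k₁ + k₂ + k₃) := by
  have hle : n₁ ≤ n := by omega
  have l1 := r1.liftTop (n := n) hle ha
  have l2 := r2.liftBottom (n₁ := n₁) hn hcS
  have l3 := r3.liftTop (n := n) hle hb
  rw [combineT_const] at l1 l3
  rw [combineT_eq_combineB n₁ n₂ hn c a] at l1
  rw [combineT_eq_combineB n₁ n₂ hn c b] at l3
  exact (l1.trans l2).trans l3

lemma frame : ∀ q n : ℕ, ∀ {p : ℕ} (S : Finset (Fin p)) (r : ℕ) (a b : Fin p),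
    S.card = q → 3 ≤ q → a ∈ S → b ∈ S → a ≠ b →
    Nat.choose (q + r - 3) (q - 2) ≤ n → n < Nat.choose (q + r - 2) (q - 2) →
    ∃ k ≤ FSK n q r, ReachIn (n := n) S (fun _ => a) (fun _ => b) k := by
  intro q
  induction q using Nat.strong_induction_on with
  | _ q ihq =>
  intro n
  induction n using Nat.strong_induction_on with
  | _ n ihn =>
  intro p S r a b hSq hq3 ha hb hab h1 h2
  by_cases hn0 : n = 0
  · subst hn0
    refine ⟨0, Nat.zero_le _, ?_⟩
    have he : (fun _ => a : HState 0 p) = fun _ => b := funext fun i => i.elim0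
    rw [he]; exact .refl _ fun i => i.elim0
  by_cases hq : q = 3
  · subst hq
    have e1 : 3 + r - 3 = r := by omega
    have e2 : 3 + r - 2 = r + 1 := by omega
    rw [e1, Nat.choose_one_right] at h1
    rw [e2, Nat.choose_one_right] at h2
    have hrn : r = n := by omega
    subst hrn
    exact ⟨2 ^ r - 1, le_of_eq (FSK_three r).symm, hanoi3 S (by omega) r a b ha hb hab⟩
  -- q ≥ 4
  have hq4 : 4 ≤ q := by omega
  have hr1 : 1 ≤ r := by
    by_contra h
    have : r = 0 := by omega
    subst this
    have e : q + 0 - 2 = q - 2 := by omega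
    rw [e, Nat.choose_self] at h2
    omega
  obtain ⟨q', rfl⟩ : ∃ q', q = q' + 4 := ⟨q - 4, by omega⟩
  obtain ⟨r', rfl⟩ : ∃ r', r = r' + 1 := ⟨r - 1, by omega⟩
  have e1 : q' + 4 + (r' + 1) - 3 = q' + r' + 2 := by omega
  have e2 : q' + 4 - 2 = q' + 2 := by omega
  have e3 : q' + 4 + (r' + 1) - 2 = q' + r' + 3 := by omega
  rw [e1, e2] at h1
  rw [e3, e2] at h2
  -- abbreviations
  set A := Nat.choose (q' + r' + 2) (q' + 2) with hA
  set B := Nat.choose (q' + r' + 2) (q' + 1) with hB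
  set A' := Nat.choose (q' + r' + 1) (q' + 2) with hA'
  set B' := Nat.choose (q' + r' + 1) (q' + 1) with hB'
  set T := Nat.choose (q' + r' + 3) (q' + 2) with hT
  have pA : A = B' + A' := Nat.choose_succ_succ (q' + r' + 1) (q' + 1)
  have pT : T = B + A := Nat.choose_succ_succ (q' + r' + 2) (q' + 1)
  have hBpos : 1 ≤ B := Nat.choose_pos (by omega)
  have hB'pos : 1 ≤ B' := Nat.choose_pos (by omega)
  obtain ⟨c, hcS, hca, hcb⟩ := exists_spare S (by omega) a b
  have hacS : a ∈ S.erase c := Finset.mem_erase.mpr ⟨fun h => hca h.symm, ha⟩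
  have hbcS : b ∈ S.erase c := Finset.mem_erase.mpr ⟨fun h => hcb h.symm, hb⟩
  have hcard : (S.erase c).card = q' + 3 := by
    rw [Finset.card_erase_of_mem hcS, hSq]
    omega
  -- index normalizations for recursive calls
  have f1 : q' + 4 + r' - 3 = q' + r' + 1 := by omega
  have f2 : q' + 4 + r' - 2 = q' + r' + 2 := by omega
  have f3 : q' + 3 + (r' + 2) - 3 = q' + r' + 2 := by omega
  have f4 : q' + 3 - 2 = q' + 1 := by omega
  have f5 : q' + 3 + (r' + 2) - 2 = q' + r' + 3 := by omega
  have f6 : q' + 3 + (r' + 1) - 3 = q' + r' + 1 := by omega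
  have f7 : q' + 3 + (r' + 1) - 2 = q' + r' + 2 := by omega
  by_cases hcase : B + A' ≤ n
  · -- Case A : n₁ = n - B, n₂ = B
    have hn12 : (n - B) + B = n := by omega
    obtain ⟨k₁, hk₁, R1⟩ := ihn (n - B) (by omega) S r' a c hSq (by omega) ha hcS
      (fun h => hca h.symm) (by rw [f1, e2, ← hA']; omega)
      (by rw [f2, e2, ← hA]; omega)
    obtain ⟨k₂, hk₂, R2⟩ := ihq (q' + 3) (by omega) B (S.erase c) (r' + 2) a b hcard
      (by omega) hacS hbcS hab (by rw [f3, f4, ← hB])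
      (by
        rw [f5, f4]
        have pX : Nat.choose (q' + r' + 3) (q' + 1) =
            Nat.choose (q' + r' + 2) q' + B := Nat.choose_succ_succ (q' + r' + 2) q'
        have : 1 ≤ Nat.choose (q' + r' + 2) q' := Nat.choose_pos (by omega)
        omega)
    obtain ⟨k₃, hk₃, R3⟩ := ihn (n - B) (by omega) S r' c b hSq (by omega) hcS hb
      hcb (by rw [f1, e2, ← hA']; omega) (by rw [f2, e2, ← hA]; omega)
    refine ⟨k₁ + k₂ + k₃, ?_, assemble hn12 hcS ha hb R1 R2 R3⟩
    calc k₁ + k₂ + k₃ ≤ 2 * FSK (n - B) (q' + 4) r' + FSK B (q' + 3) (r' + 2) := by omega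
      _ = FSK n (q' + 4) (r' + 1) := FSK_id_A q' r' n (by omega)
  · -- Case B : n₁ = A', n₂ = n - A'
    have hn12 : A' + (n - A') = n := by omega
    obtain ⟨k₁, hk₁, R1⟩ := ihn A' (by omega) S r' a c hSq (by omega) ha hcS
      (fun h => hca h.symm) (by rw [f1, e2, ← hA']) (by rw [f2, e2, ← hA]; omega)
    obtain ⟨k₂, hk₂, R2⟩ := ihq (q' + 3) (by omega) (n - A') (S.erase c) (r' + 1) a b
      hcard (by omega) hacS hbcS hab (by rw [f6, f4, ← hB']; omega)
      (by rw [f7, f4, ← hB]; omega)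
    obtain ⟨k₃, hk₃, R3⟩ := ihn A' (by omega) S r' c b hSq (by omega) hcS hb hcb
      (by rw [f1, e2, ← hA']) (by rw [f2, e2, ← hA]; omega)
    refine ⟨k₁ + k₂ + k₃, ?_, assemble hn12 hcS ha hb R1 R2 R3⟩
    calc k₁ + k₂ + k₃ ≤ 2 * FSK A' (q' + 4) r' + FSK (n - A') (q' + 3) (r' + 1) := by omega
      _ = FSK n (q' + 4) (r' + 1) := FSK_id_B q' r' n (by omega)

end FrameStewart
/-- M(n,p) ≤ K(n,p): the minimal number of moves between two distinct
constant states is at most the Frame-Stewart quantity. -/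
theorem M_le_FSK (n p r : ℕ) (hn : 1 ≤ n) (hp : 3 ≤ p)
    (h1 : Nat.choose (p + r - 3) (p - 2) ≤ n)
    (h2 : n < Nat.choose (p + r - 2) (p - 2)) :
    ∀ a b : Fin p, a ≠ b →
      hDist (n := n) (fun _ => a) (fun _ => b) ≤ FSK n p r := by
  intro a b hab
  have hcard : (Finset.univ : Finset (Fin p)).card = p := by simp
  obtain ⟨k, hk, R⟩ := FrameStewart.frame p n Finset.univ r a b hcard hp
    (Finset.mem_univ a) (Finset.mem_univ b) hab h1 h2
  exact le_trans (FrameStewart.hDist_le_of_reach R) hk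
end

section
/- For every n ≥ 1, p ≥ 4, K(n, p) ≤ K(n, p-1): adding available pegs never increases the Frame-Stewart bound. -/
open Finset

lemma FS_pascal (a j : ℕ) :
    Nat.choose (a + j + 1) (j + 1) = Nat.choose (a + j) j + Nat.choose (a + j) (j + 1) :=
  Nat.choose_succ_succ _ _

lemma FS_exists (j i : ℕ) : ∃ t, i < Nat.choose (t + j + 1) (j + 1) := by
  refine ⟨i, ?_⟩
  have h1 : i + 1 = Nat.choose (i + 1) i := (Nat.choose_succ_self_right i).symm
  have h2 : Nat.choose (i + 1) i ≤ Nat.choose (i + j + 1) i :=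
    Nat.choose_le_choose i (by omega)
  have h3 : Nat.choose (i + j + 1) i = Nat.choose (i + j + 1) (j + 1) := by
    have := Nat.choose_symm (show j + 1 ≤ i + j + 1 by omega)
    simpa [show i + j + 1 - (j + 1) = i by omega] using this
  omega

/-- least t with i < C(t+j+1, j+1) -/
def FSa (j i : ℕ) : ℕ := Nat.find (FS_exists j i)

def FSS (j n : ℕ) : ℕ := ∑ i ∈ Finset.range n, 2 ^ FSa j i

lemma FSa_eq (j r i : ℕ) (h1 : Nat.choose (r + j) (j + 1) ≤ i)
    (h2 : i < Nat.choose (r + j + 1) (j + 1)) : FSa j i = r := by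
  rw [FSa, Nat.find_eq_iff]
  refine ⟨h2, fun t ht => ?_⟩
  have : Nat.choose (t + j + 1) (j + 1) ≤ Nat.choose (r + j) (j + 1) :=
    Nat.choose_le_choose _ (by omega)
  omega

lemma hockey (j r : ℕ) :
    ∑ t ∈ Finset.range r, Nat.choose (t + j) j = Nat.choose (r + j) (j + 1) := by
  induction r with
  | zero => simp [Nat.choose_eq_zero_of_lt]
  | succ r ih =>
    rw [Finset.sum_range_succ, ih, show r + 1 + j = r + j + 1 by ring]
    have := FS_pascal r j
    omega

lemma FSS_block (j r n : ℕ) (h1 : Nat.choose (r + j) (j + 1) ≤ n)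
    (h2 : n ≤ Nat.choose (r + j + 1) (j + 1)) :
    FSS j n = FSS j (Nat.choose (r + j) (j + 1)) +
      2 ^ r * (n - Nat.choose (r + j) (j + 1)) := by
  set m := Nat.choose (r + j) (j + 1) with hm
  rw [FSS, FSS, Finset.range_eq_Ico, ← Finset.sum_Ico_consecutive _ (Nat.zero_le m) h1,
    ← Finset.range_eq_Ico]
  congr 1
  have hc : ∀ i ∈ Finset.Ico m n, 2 ^ FSa j i = 2 ^ r := by
    intro i hi
    simp only [Finset.mem_Ico] at hi
    rw [FSa_eq j r i hi.1 (lt_of_lt_of_le hi.2 h2)]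
  rw [Finset.sum_congr rfl hc, Finset.sum_const, Nat.card_Ico, smul_eq_mul, mul_comm]

lemma FSS_c (j r : ℕ) :
    FSS j (Nat.choose (r + j) (j + 1)) = ∑ t ∈ Finset.range r, 2 ^ t * Nat.choose (t + j) j := by
  induction r with
  | zero => simp [FSS, Nat.choose_eq_zero_of_lt]
  | succ r ih =>
    have hle : Nat.choose (r + j) (j + 1) ≤ Nat.choose (r + j + 1) (j + 1) :=
      Nat.choose_le_choose _ (by omega)
    have hb := FSS_block j r (Nat.choose (r + j + 1) (j + 1)) hle le_rfl
    have hps := FS_pascal r j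
    have hp : Nat.choose (r + j + 1) (j + 1) - Nat.choose (r + j) (j + 1)
        = Nat.choose (r + j) j := by omega
    rw [show r + 1 + j = r + j + 1 by ring, hb, ih, hp, Finset.sum_range_succ]

lemma FSS_eq (j r n : ℕ) (h1 : Nat.choose (r + j) (j + 1) ≤ n)
    (h2 : n < Nat.choose (r + j + 1) (j + 1)) :
    FSS j n = (∑ t ∈ Finset.range r, 2 ^ t * Nat.choose (t + j) j) +
      2 ^ r * (n - Nat.choose (r + j) (j + 1)) := by
  rw [FSS_block j r n h1 (le_of_lt h2), FSS_c]

lemma FSa_mono (j i : ℕ) : FSa (j + 1) i ≤ FSa j i := by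
  apply Nat.find_min'
  have h : i < Nat.choose (FSa j i + j + 1) (j + 1) := Nat.find_spec (FS_exists j i)
  have hps : Nat.choose (FSa j i + (j + 1) + 1) (j + 1 + 1)
      = Nat.choose (FSa j i + j + 1) (j + 1) + Nat.choose (FSa j i + j + 1) (j + 1 + 1) := by
    have := FS_pascal (FSa j i) (j + 1)
    rw [show FSa j i + (j + 1) = FSa j i + j + 1 by ring] at this
    exact this
  omega

lemma FSS_mono (j n : ℕ) : FSS (j + 1) n ≤ FSS j n :=
  Finset.sum_le_sum fun i _ => Nat.pow_le_pow_right (by norm_num) (FSa_mono j i)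

/-- Adding pegs never increases the Frame-Stewart bound: K(n,p) <= K(n,p-1) for p >= 4. -/
theorem FSK_antitone_pegs (n p r r' : ℕ) (hn : 1 ≤ n) (hp : 4 ≤ p)
    (h1 : Nat.choose (p + r - 3) (p - 2) ≤ n)
    (h2 : n < Nat.choose (p + r - 2) (p - 2))
    (h1' : Nat.choose ((p - 1) + r' - 3) ((p - 1) - 2) ≤ n)
    (h2' : n < Nat.choose ((p - 1) + r' - 2) ((p - 1) - 2)) :
    FSK n p r ≤ FSK n (p - 1) r' := by
  set j := p - 4 with hj
  have e1 : ∀ t, p + t - 3 = t + (j + 1) := fun t => by omega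
  have e2 : p - 3 = j + 1 := by omega
  have e3 : p + r - 3 = r + (j + 1) := by omega
  have e4 : p - 2 = (j + 1) + 1 := by omega
  have e5 : p + r - 2 = r + (j + 1) + 1 := by omega
  have f1 : ∀ t, (p - 1) + t - 3 = t + j := fun t => by omega
  have f2 : (p - 1) - 3 = j := by omega
  have f3 : (p - 1) + r' - 3 = r' + j := by omega
  have f4 : (p - 1) - 2 = j + 1 := by omega
  have f5 : (p - 1) + r' - 2 = r' + j + 1 := by omega
  simp only [FSK, e1, e2, e3, e4, e5, f1, f2, f3, f4, f5] at h1 h2 h1' h2' ⊢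
  rw [← FSS_eq _ _ _ h1 h2, ← FSS_eq _ _ _ h1' h2']
  exact FSS_mono j n
end
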